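/- Let (G,σ) be a cubic signed graph with signed-girth g_s(G,σ) ≥ |E(G)|/3 + 2. Then (G,σ) does not contain two vertex-disjoint circuits each containing a negative edge. -/

import Mathlib

open SimpleGraph

open scoped Classical

variable {V : Type*} [Fintype V] [DecidableEq V]

/-- Number of negative edges (w.r.t. signature `σ`, `true` = negative) in a set of edges. -/
noncomputable def negCount (σ : Sym2 V → Bool) (s : Set (Sym2 V)) : ℕ :=
  {e ∈ s | σ e = true}.ncard

/-- A subgraph is a cycle: connected and 2-regular (on its vertex set). -/
def SubIsCycle (G : SimpleGraph V) (C : G.Subgraph) : Prop :=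
  C.Connected ∧ ∀ v ∈ C.verts, (C.neighborSet v).ncard = 2

/-- A positive cycle: a cycle with an even number of negative edges. -/
def IsPosCycle (G : SimpleGraph V) (σ : Sym2 V → Bool) (C : G.Subgraph) : Prop :=
  SubIsCycle G C ∧ Even (negCount σ C.edgeSet)

/-- A negative cycle: a cycle with an odd number of negative edges. -/
def IsNegCycle (G : SimpleGraph V) (σ : Sym2 V → Bool) (C : G.Subgraph) : Prop :=
  SubIsCycle G C ∧ Odd (negCount σ C.edgeSet)

/-- A subgraph is a path from `u` to `v` (possibly of length zero). -/
def IsPathSub (G : SimpleGraph V) (P : G.Subgraph) (u v : V) : Prop :=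
  ∃ w : G.Walk u v, w.IsPath ∧ P = w.toSubgraph

/-- A barbell: two edge-disjoint negative cycles joined by a path (possibly of length zero). -/
def IsBarbell (G : SimpleGraph V) (σ : Sym2 V → Bool) (B : G.Subgraph) : Prop :=
  ∃ C₁ C₂ P : G.Subgraph, IsNegCycle G σ C₁ ∧ IsNegCycle G σ C₂ ∧
    C₁.edgeSet ∩ C₂.edgeSet = ∅ ∧
    (∃ u v : V, IsPathSub G P u v ∧ u ∈ C₁.verts ∧ v ∈ C₂.verts ∧
      P.verts ∩ C₁.verts = {u} ∧ P.verts ∩ C₂.verts = {v}) ∧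
    C₁.verts ∩ C₂.verts ⊆ P.verts ∧
    B = C₁ ⊔ C₂ ⊔ P

/-- A circuit of a signed graph: a positive cycle or a barbell. -/
def IsCircuit (G : SimpleGraph V) (σ : Sym2 V → Bool) (C : G.Subgraph) : Prop :=
  IsPosCycle G σ C ∨ IsBarbell G σ C

/-- Total length (number of edges, with multiplicity) of a family of subgraphs. -/
noncomputable def coverLen (G : SimpleGraph V) (F : Multiset G.Subgraph) : ℕ :=
  (F.map fun C => C.edgeSet.ncard).sum

/-- A circuit cover: a family of circuits covering all edges of the graph. -/
def IsCircuitCover (G : SimpleGraph V) (σ : Sym2 V → Bool) (F : Multiset G.Subgraph) : Prop :=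
  (∀ C ∈ F, IsCircuit G σ C) ∧ ∀ e ∈ G.edgeSet, ∃ C ∈ F, e ∈ C.edgeSet

/-- The length of a shortest circuit cover. -/
noncomputable def scc (G : SimpleGraph V) (σ : Sym2 V → Bool) : ℕ :=
  sInf {n | ∃ F : Multiset G.Subgraph, IsCircuitCover G σ F ∧ coverLen G F = n}

/-- An edge crosses the cut determined by a vertex set `X`. -/
def crossesCut (X : Set V) (e : Sym2 V) : Prop :=
  ∃ u v : V, e = s(u, v) ∧ (u ∈ X ↔ v ∉ X)

/-- The edge cut of `G` determined by the vertex set `X`. -/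
def cutEdges (G : SimpleGraph V) (X : Set V) : Set (Sym2 V) :=
  {e ∈ G.edgeSet | crossesCut X e}

/-- Two signatures are (switching) equivalent: they differ exactly on an edge cut. -/
def SwitchEquiv (G : SimpleGraph V) (σ σ' : Sym2 V → Bool) : Prop :=
  ∃ X : Set V, ∀ e ∈ G.edgeSet,
    (crossesCut X e → σ' e = !σ e) ∧ (¬crossesCut X e → σ' e = σ e)

/-- The negativeness: minimum number of negative edges over equivalent signatures. -/
noncomputable def epsilonNeg (G : SimpleGraph V) (σ : Sym2 V → Bool) : ℕ :=
  sInf {n | ∃ σ' : Sym2 V → Bool, SwitchEquiv G σ σ' ∧ negCount σ' G.edgeSet = n}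

/-- `σ` attains the minimum number of negative edges among equivalent signatures. -/
def MinSignature (G : SimpleGraph V) (σ : Sym2 V → Bool) : Prop :=
  negCount σ G.edgeSet = epsilonNeg G σ

/-- `G` is 2-edge-connected: connected and with no cutedge. -/
def TwoEdgeConnected (G : SimpleGraph V) : Prop :=
  G.Connected ∧ ∀ e ∈ G.edgeSet, (G.deleteEdges {e}).Connected

/-- `G` is cubic (3-regular). -/
def IsCubic (G : SimpleGraph V) : Prop :=
  ∀ v : V, (G.neighborSet v).ncard = 3

/-- The positive subgraph `G⁺`: delete all negative edges. -/
def posSubgraph (G : SimpleGraph V) (σ : Sym2 V → Bool) : SimpleGraph V :=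
  G.deleteEdges {e | σ e = true}

/-- Number of edges of `G`. -/
noncomputable def numEdges (G : SimpleGraph V) : ℕ := G.edgeSet.ncard

/-- A cycle-tree: connected, no degree-1 vertices, all cycles pairwise edge-disjoint. -/
def IsCycleTree (H : SimpleGraph V) : Prop :=
  H.Connected ∧ (∀ v : V, (H.neighborSet v).ncard ≠ 1) ∧
    ∀ C₁ C₂ : H.Subgraph, SubIsCycle H C₁ → SubIsCycle H C₂ → C₁ ≠ C₂ →
      C₁.edgeSet ∩ C₂.edgeSet = ∅

/-- A signed cycle-tree: a cycle-tree in which every cycle has a negative edge. -/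
def IsSignedCycleTree (H : SimpleGraph V) (σ : Sym2 V → Bool) : Prop :=
  IsCycleTree H ∧ ∀ C : H.Subgraph, SubIsCycle H C → 0 < negCount σ C.edgeSet

/-- A leaf-cycle of `H`: a cycle `D` attached to the rest of `H` through a single vertex `v`. -/
def IsLeafCycle (H : SimpleGraph V) (D : H.Subgraph) : Prop :=
  SubIsCycle H D ∧ ∃ v ∈ D.verts, ∀ e ∈ H.edgeSet,
    (∃ u : V, u ∈ e ∧ u ∈ D.verts ∧ u ≠ v) → e ∈ D.edgeSet

/-- A subgraph `N` of `G` is a cycle-tree. -/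
def IsCycleTreeSub (G : SimpleGraph V) (N : G.Subgraph) : Prop :=
  N.Connected ∧ (∀ v ∈ N.verts, (N.neighborSet v).ncard ≠ 1) ∧
    ∀ C₁ C₂ : G.Subgraph, C₁ ≤ N → C₂ ≤ N → SubIsCycle G C₁ → SubIsCycle G C₂ →
      C₁ ≠ C₂ → C₁.edgeSet ∩ C₂.edgeSet = ∅

/-- A leaf-cycle of a cycle-tree subgraph `N`. -/
def IsLeafCycleOf (G : SimpleGraph V) (N D : G.Subgraph) : Prop :=
  D ≤ N ∧ SubIsCycle G D ∧ ∃ v ∈ D.verts, ∀ e ∈ N.edgeSet,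
    (∃ u : V, u ∈ e ∧ u ∈ D.verts ∧ u ≠ v) → e ∈ D.edgeSet


section Aux

lemma edge_le_vert (G : SimpleGraph V) (C : G.Subgraph)
    (h2 : ∀ v ∈ C.verts, (C.neighborSet v).ncard ≤ 2) :
    C.edgeSet.ncard ≤ C.verts.ncard := by
  have hsum := C.coe.sum_degrees_eq_twice_card_edges
  simp only [SimpleGraph.edgeFinset] at hsum
  rw [← Set.ncard_eq_toFinset_card'] at hsum
  have hns : ∀ v : C.verts, (C.coe.neighborSet v).ncard ≤ 2 := by
    intro v
    have himg : Subtype.val '' (C.coe.neighborSet v) = C.neighborSet v := by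
      ext x
      constructor
      · rintro ⟨y, hy, rfl⟩; exact hy
      · intro hx
        exact ⟨⟨x, C.neighborSet_subset_verts _ hx⟩, hx, rfl⟩
    calc (C.coe.neighborSet v).ncard
        = (Subtype.val '' (C.coe.neighborSet v)).ncard :=
          (Set.ncard_image_of_injective _ Subtype.val_injective).symm
      _ = (C.neighborSet v).ncard := by rw [himg]
      _ ≤ 2 := h2 v v.2
  have hdeg : ∀ (v : C.verts) (inst : Fintype (C.coe.neighborSet v)),
      @SimpleGraph.degree _ C.coe v inst ≤ 2 := by
    intro v inst
    have : @SimpleGraph.degree _ C.coe v inst = (C.coe.neighborSet v).ncard := by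
      rw [SimpleGraph.degree, SimpleGraph.neighborFinset, ← Set.ncard_eq_toFinset_card']
    rw [this]; exact hns v
  have key : 2 * C.coe.edgeSet.ncard ≤ 2 * Fintype.card C.verts := by
    rw [← hsum]
    refine le_trans (Finset.sum_le_sum fun v _ => hdeg v _) ?_
    simp [mul_comm]
  have hE : C.edgeSet.ncard = C.coe.edgeSet.ncard := by
    rw [← C.image_coe_edgeSet_coe,
      Set.ncard_image_of_injective _ (Sym2.map.injective Subtype.val_injective)]
  have hV : C.verts.ncard = Fintype.card C.verts := by
    rw [Set.ncard_eq_toFinset_card', Set.toFinset_card]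
  rw [hE, hV]
  omega

lemma path_card (G : SimpleGraph V) (P : G.Subgraph) (u v : V)
    (h : ∃ w : G.Walk u v, w.IsPath ∧ P = w.toSubgraph) :
    P.edgeSet.ncard + 1 ≤ P.verts.ncard := by
  obtain ⟨w, hw, rfl⟩ := h
  have hV : w.toSubgraph.verts.ncard = w.length + 1 := by
    rw [Walk.verts_toSubgraph]
    have : {x | x ∈ w.support} = ↑w.support.toFinset := by simp
    rw [this, Set.ncard_coe_finset, List.toFinset_card_of_nodup hw.support_nodup,
      Walk.length_support]
  have hE : w.toSubgraph.edgeSet.ncard ≤ w.length := by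
    rw [Walk.edgeSet_toSubgraph]
    have : {e | e ∈ w.edges} = ↑w.edges.toFinset := by simp
    rw [show w.edgeSet = {e | e ∈ w.edges} from rfl, this, Set.ncard_coe_finset]
    calc w.edges.toFinset.card ≤ w.edges.length := List.toFinset_card_le _
      _ = w.length := w.length_edges
  omega

lemma circuit_edge_le (G : SimpleGraph V) (σ : Sym2 V → Bool) (C : G.Subgraph)
    (h : IsCircuit G σ C) : C.edgeSet.ncard ≤ C.verts.ncard + 1 := by
  rcases h with ⟨⟨_, hreg⟩, _⟩ | ⟨C₁, C₂, P, h1, h2, hedisj, ⟨u, v, hP, huC1, hvC2, hPC1, hPC2⟩, hsub, rfl⟩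
  · exact le_trans (edge_le_vert G C fun v hv => le_of_eq (hreg v hv)) (Nat.le_succ _)
  · have e1 := edge_le_vert G C₁ fun x hx => le_of_eq (h1.1.2 x hx)
    have e2 := edge_le_vert G C₂ fun x hx => le_of_eq (h2.1.2 x hx)
    have eP := path_card G P u v hP
    set A := C₁.verts
    set B := C₂.verts
    set Q := P.verts
    have hABfin : ∀ s : Set V, s.Finite := fun s => s.toFinite
    -- cardinality of {u, v} plus card of A ∩ B is at most 2
    have hQA : Q ∩ A = {u} := hPC1
    have hQB : Q ∩ B = {v} := hPC2
    have hk : (A ∩ B).ncard + ({u, v} : Set V).ncard ≤ 2 := by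
      by_cases huv : u = v
      · have h1' : (A ∩ B).ncard ≤ 1 := by
          have : A ∩ B ⊆ {u} := by
            intro x hx
            have hxQ : x ∈ Q := hsub hx
            rw [← hQA]; exact ⟨hxQ, hx.1⟩
          calc (A ∩ B).ncard ≤ ({u} : Set V).ncard := Set.ncard_le_ncard this (hABfin _)
            _ = 1 := Set.ncard_singleton u
        have h2' : ({u, v} : Set V).ncard = 1 := by
          subst huv; simp
        omega
      · have h1' : (A ∩ B).ncard = 0 := by
          have : A ∩ B ⊆ (∅ : Set V) := by
            intro x hx
            have hxQ : x ∈ Q := hsub hx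
            have hxu : x ∈ ({u} : Set V) := by rw [← hQA]; exact ⟨hxQ, hx.1⟩
            have hxv : x ∈ ({v} : Set V) := by rw [← hQB]; exact ⟨hxQ, hx.2⟩
            exact absurd (hxu.symm.trans hxv) huv
          simp [Set.subset_empty_iff.mp this]
        have h2' : ({u, v} : Set V).ncard = 2 := Set.ncard_pair huv
        omega
    -- vertex count lower bound
    have hAB := Set.ncard_union_add_ncard_inter A B (hABfin A) (hABfin B)
    have hABQ := Set.ncard_union_add_ncard_inter (A ∪ B) Q (hABfin _) (hABfin Q)
    have hint : ((A ∪ B) ∩ Q).ncard ≤ ({u, v} : Set V).ncard := by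
      apply Set.ncard_le_ncard _ (hABfin _)
      rintro x ⟨hx, hxQ⟩
      rcases hx with hx | hx
      · left; have : x ∈ ({u} : Set V) := by rw [← hQA]; exact ⟨hxQ, hx⟩
        exact this
      · right; have : x ∈ ({v} : Set V) := by rw [← hQB]; exact ⟨hxQ, hx⟩
        exact this
    have hverts : (C₁ ⊔ C₂ ⊔ P).verts = (A ∪ B) ∪ Q := rfl
    have hedges : (C₁ ⊔ C₂ ⊔ P).edgeSet = (C₁.edgeSet ∪ C₂.edgeSet) ∪ P.edgeSet := by
      simp [Subgraph.edgeSet_sup]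
    have hele : (C₁ ⊔ C₂ ⊔ P).edgeSet.ncard ≤
        C₁.edgeSet.ncard + C₂.edgeSet.ncard + P.edgeSet.ncard := by
      rw [hedges]
      exact le_trans (Set.ncard_union_le _ _)
        (by have := Set.ncard_union_le C₁.edgeSet C₂.edgeSet; omega)
    rw [hverts]
    omega

end Aux

/-- The signed girth: minimum length of a circuit containing a negative edge. -/
noncomputable def signedGirth (G : SimpleGraph V) (σ : Sym2 V → Bool) : ℕ :=
  sInf {n | ∃ C : G.Subgraph, IsCircuit G σ C ∧ 0 < negCount σ C.edgeSet ∧ C.edgeSet.ncard = n}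

theorem stmt_11 (G : SimpleGraph V) (σ : Sym2 V → Bool) (hcubic : IsCubic G)
    (hgirth : numEdges G + 6 ≤ 3 * signedGirth G σ) :
    ¬∃ C₁ C₂ : G.Subgraph, IsCircuit G σ C₁ ∧ 0 < negCount σ C₁.edgeSet ∧
      IsCircuit G σ C₂ ∧ 0 < negCount σ C₂.edgeSet ∧ C₁.verts ∩ C₂.verts = ∅ := by
  rintro ⟨C₁, C₂, hc1, hn1, hc2, hn2, hdisj⟩
  have hg1 : signedGirth G σ ≤ C₁.edgeSet.ncard := Nat.sInf_le ⟨C₁, hc1, hn1, rfl⟩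
  have hg2 : signedGirth G σ ≤ C₂.edgeSet.ncard := Nat.sInf_le ⟨C₂, hc2, hn2, rfl⟩
  have he1 := circuit_edge_le G σ C₁ hc1
  have he2 := circuit_edge_le G σ C₂ hc2
  have hVle : C₁.verts.ncard + C₂.verts.ncard ≤ Fintype.card V := by
    rw [← Set.ncard_union_eq (Set.disjoint_iff_inter_eq_empty.mpr hdisj)
      C₁.verts.toFinite C₂.verts.toFinite]
    calc (C₁.verts ∪ C₂.verts).ncard ≤ (Set.univ : Set V).ncard :=
        Set.ncard_le_ncard (Set.subset_univ _) Set.finite_univ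
      _ = Fintype.card V := by rw [Set.ncard_univ, Nat.card_eq_fintype_card]
  have hcard : 3 * Fintype.card V = 2 * numEdges G := by
    have hsum := G.sum_degrees_eq_twice_card_edges
    simp only [SimpleGraph.edgeFinset] at hsum
    rw [← Set.ncard_eq_toFinset_card'] at hsum
    have hdeg : ∀ (v : V) (inst : Fintype (G.neighborSet v)),
        @SimpleGraph.degree _ G v inst = 3 := by
      intro v inst
      have : @SimpleGraph.degree _ G v inst = (G.neighborSet v).ncard := by
        rw [SimpleGraph.degree, SimpleGraph.neighborFinset, ← Set.ncard_eq_toFinset_card']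
      rw [this]; exact hcubic v
    have hsum2 : 3 * Fintype.card V = 2 * G.edgeSet.ncard := by
      rw [← hsum]
      rw [Finset.sum_congr rfl fun v _ => hdeg v _]
      simp [mul_comm]
    rw [hsum2]; rfl
  omega
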